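/- For n ≥ 2, let B_n = ℝI_n ⊕ span(E_{1,n}, E_{2,n}, …, E_{n−1,n}) ⊆ M(n,ℝ). Then B_n is an n-dimensional maximal abelian subalgebra of gl(n,ℝ): any matrix b commuting with I_n and with every E_{i,n} (1 ≤ i ≤ n−1) belongs to B_n. Moreover, for n ≥ 3, for every linear form α on ℝ^n the orbit {α∘a : a ∈ B_n} is contained in span(α, ẽ_n*) and hence has dimension at most 2; in particular B_n has no open orbit on (ℝ^n)* when n ≥ 3. -/

import Mathlib

open Matrix

section stmt17aux
variable {n : ℕ}

private lemma aux17_v_apply (last : Fin n) (i k : Fin n) :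
    (if k = last then (1 : Matrix (Fin n) (Fin n) ℝ)
      else Matrix.single k last (1 : ℝ)) i last = if k = i then 1 else 0 := by
  by_cases hk : k = last
  · subst hk
    by_cases hi : k = i
    · subst hi; simp
    · simp [Matrix.one_apply, Ne.symm hi, hi]
  · simp only [if_neg hk]
    by_cases hi : k = i
    · subst hi; simp [Matrix.single_apply_same]
    · rw [Matrix.single_apply_of_ne _ _ _ _ _ (by tauto)]
      simp [hi]

private lemma aux17_li (last : Fin n) :
    LinearIndependent ℝ (fun k : Fin n =>
      if k = last then (1 : Matrix (Fin n) (Fin n) ℝ)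
      else Matrix.single k last (1 : ℝ)) := by
  rw [Fintype.linearIndependent_iff]
  intro g hg i
  have := congrFun (congrFun hg i) last
  simp only [Matrix.sum_apply, Matrix.smul_apply, smul_eq_mul, Matrix.zero_apply] at this
  rw [Finset.sum_congr rfl (fun k _ => by rw [aux17_v_apply])] at this
  simpa using this

private lemma aux17_range (last : Fin n) :
    Set.range (fun k : Fin n =>
      if k = last then (1 : Matrix (Fin n) (Fin n) ℝ)
      else Matrix.single k last (1 : ℝ)) =
    ({(1 : Matrix (Fin n) (Fin n) ℝ)}
        ∪ {A | ∃ i : Fin n, i ≠ last ∧ A = Matrix.single i last (1 : ℝ)}) := by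
  ext A
  constructor
  · rintro ⟨k, rfl⟩
    by_cases hk : k = last
    · left; simp [hk]
    · right; exact ⟨k, hk, by simp [hk]⟩
  · rintro (hA | ⟨i, hi, rfl⟩)
    · exact ⟨last, by simp [hA.symm]⟩
    · exact ⟨i, by simp [hi]⟩

private lemma aux17_mem (last : Fin n) (b : Matrix (Fin n) (Fin n) ℝ)
    (h1 : ∀ i j : Fin n, i ≠ j → j ≠ last → b i j = 0)
    (h2 : ∀ i : Fin n, i ≠ last → b i i = b last last) :
    b ∈ Submodule.span ℝ
      ({(1 : Matrix (Fin n) (Fin n) ℝ)}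
        ∪ {A | ∃ i : Fin n, i ≠ last ∧ A = Matrix.single i last (1 : ℝ)}) := by
  have hb : b = b last last • (1 : Matrix (Fin n) (Fin n) ℝ)
      + ∑ i ∈ Finset.univ.erase last, b i last • Matrix.single i last (1 : ℝ) := by
    ext k j
    simp only [Matrix.add_apply, Matrix.smul_apply, Matrix.sum_apply, smul_eq_mul,
      Matrix.one_apply]
    rw [Finset.sum_congr rfl (fun i hi => by
      rw [show Matrix.single i last (1:ℝ) k j
            = if i = k ∧ last = j then (1:ℝ) else 0 from rfl,
        mul_ite, mul_one, mul_zero])]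
    by_cases hj : j = last
    · by_cases hk : k = last
      · rw [Finset.sum_eq_zero (fun i hi => by
          simp only [Finset.mem_erase] at hi
          rw [if_neg (by rw [hk]; tauto)])]
        simp [hk, hj]
      · rw [Finset.sum_eq_single k
          (fun i _ hik => if_neg (by tauto))
          (fun h => absurd (Finset.mem_erase.2 ⟨hk, Finset.mem_univ k⟩) h)]
        simp [hj, hk, Ne.symm (hj ▸ hk : k ≠ j)]
    · rw [Finset.sum_eq_zero (fun i hi => if_neg (by tauto))]
      by_cases hk : k = j
      · rw [hk, if_pos rfl, add_zero, h2 j (by tauto), mul_one]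
      · simp [hk, h1 k j hk hj]
  rw [hb]
  exact Submodule.add_mem _
    (Submodule.smul_mem _ _ (Submodule.subset_span (Or.inl rfl)))
    (Submodule.sum_mem _ (fun i hi => Submodule.smul_mem _ _ (Submodule.subset_span
      (Or.inr ⟨i, (Finset.mem_erase.1 hi).1, rfl⟩))))

private lemma aux17_mulVecLin_smul (c : ℝ) (M : Matrix (Fin n) (Fin n) ℝ) :
    (c • M).mulVecLin = c • M.mulVecLin := by
  ext v k
  simp [Matrix.smul_mulVec]

private lemma aux17_mulVecLin_E (last i : Fin n)
    (α : (Fin n → ℝ) →ₗ[ℝ] ℝ) :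
    α ∘ₗ (Matrix.single i last (1 : ℝ)).mulVecLin
      = (α (Pi.single i 1)) • (LinearMap.proj last : (Fin n → ℝ) →ₗ[ℝ] ℝ) := by
  refine LinearMap.ext fun v => ?_
  have hv : (Matrix.single i last (1 : ℝ)).mulVec v = v last • (Pi.single i (1:ℝ) : Fin n → ℝ) := by
    ext k
    simp only [Matrix.mulVec, dotProduct, Pi.smul_apply, smul_eq_mul]
    rw [Finset.sum_congr rfl (fun j _ => by
      rw [show Matrix.single i last (1:ℝ) k j
            = if i = k ∧ last = j then (1:ℝ) else 0 from rfl,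
        ite_mul, one_mul, zero_mul])]
    by_cases hk : i = k
    · subst hk
      rw [Finset.sum_eq_single last (fun j _ hj => if_neg (by tauto))
        (fun h => absurd (Finset.mem_univ last) h)]
      simp
    · rw [Finset.sum_eq_zero (fun j _ => if_neg (by tauto))]
      simp [Ne.symm hk, Pi.single_apply]
  simp only [LinearMap.comp_apply, Matrix.mulVecLin_apply, hv, _root_.map_smul,
    LinearMap.smul_apply, LinearMap.proj_apply, smul_eq_mul]
  ring

end stmt17aux

/-- B_n = ℝIₙ ⊕ span(E_{1,n},…,E_{n−1,n}) is an n-dimensional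
maximal abelian subalgebra of gl(n,ℝ); for n ≥ 3, every contragredient orbit
{α∘a : a ∈ B_n} lies in span(α, ẽ_n*), so B_n has no open orbit on (ℝⁿ)*. -/
theorem stmt17 {n : ℕ} (hn : 2 ≤ n)
    (last : Fin n) (hlast : (last : ℕ) = n - 1)
    (B : Submodule ℝ (Matrix (Fin n) (Fin n) ℝ))
    (hB : B = Submodule.span ℝ
      ({(1 : Matrix (Fin n) (Fin n) ℝ)}
        ∪ {A | ∃ i : Fin n, i ≠ last ∧ A = Matrix.single i last (1 : ℝ)})) :
    Module.finrank ℝ B = n ∧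
    (∀ a ∈ B, ∀ b ∈ B, a * b = b * a) ∧
    (∀ b : Matrix (Fin n) (Fin n) ℝ,
      (∀ i : Fin n, i ≠ last →
        b * Matrix.single i last (1 : ℝ)
          = Matrix.single i last (1 : ℝ) * b) → b ∈ B) ∧
    (3 ≤ n → ∀ α : (Fin n → ℝ) →ₗ[ℝ] ℝ,
      (∀ a ∈ B, α ∘ₗ Matrix.mulVecLin a ∈ Submodule.span ℝ
        ({α, LinearMap.proj last} : Set ((Fin n → ℝ) →ₗ[ℝ] ℝ))) ∧
      Submodule.span ℝ
        {f : (Fin n → ℝ) →ₗ[ℝ] ℝ | ∃ a ∈ B, f = α ∘ₗ Matrix.mulVecLin a} ≠ ⊤) := by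
  set S : Set (Matrix (Fin n) (Fin n) ℝ) :=
      ({(1 : Matrix (Fin n) (Fin n) ℝ)}
        ∪ {A | ∃ i : Fin n, i ≠ last ∧ A = Matrix.single i last (1 : ℝ)}) with hS
  -- generators commute
  have hgen : ∀ x ∈ S, ∀ y ∈ S, x * y = y * x := by
    rintro x (hx | ⟨i, hi, rfl⟩) y (hy | ⟨j, hj, rfl⟩)
    · rw [hx, hy]
    · simp only [Set.mem_singleton_iff] at hx
      rw [hx, one_mul, mul_one]
    · simp only [Set.mem_singleton_iff] at hy
      rw [hy, one_mul, mul_one]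
    · rw [Matrix.single_mul_single_of_ne (h := Ne.symm hj),
        Matrix.single_mul_single_of_ne (h := Ne.symm hi)]
  have hcomm : ∀ a ∈ B, ∀ b ∈ B, a * b = b * a := by
    rw [hB]
    intro a ha
    induction ha using Submodule.span_induction with
    | mem x hx =>
      intro b hb
      induction hb using Submodule.span_induction with
      | mem y hy => exact hgen x hx y hy
      | zero => simp
      | add y z _ _ hy hz => rw [mul_add, add_mul, hy, hz]
      | smul c y _ hy => rw [mul_smul_comm, smul_mul_assoc, hy]
    | zero => intro b _; simp
    | add x y _ _ hx hy => intro b hb; rw [add_mul, mul_add, hx b hb, hy b hb]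
    | smul c x _ hx => intro b hb; rw [smul_mul_assoc, mul_smul_comm, hx b hb]
  refine ⟨?_, hcomm, ?_, ?_⟩
  · -- finrank
    rw [hB, hS, ← aux17_range last, finrank_span_eq_card (aux17_li last),
      Fintype.card_fin]
  · -- maximality
    intro b hb
    have hA : ∀ i : Fin n, i ≠ last → ∀ k : Fin n,
        b k i = if k = i then b last last else 0 := by
      intro i hi k
      have := congrFun (congrFun (hb i hi) k) last
      rw [Matrix.mul_single_apply_same, mul_one] at this
      by_cases hk : k = i
      · subst hk
        rw [Matrix.single_mul_apply_same, one_mul] at this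
        simp [this]
      · rw [Matrix.single_mul_apply_of_ne (h := hk)] at this
        simp [hk, this]
    rw [hB, hS]
    refine aux17_mem last b (fun i j hij hj => ?_) (fun i hi => ?_)
    · rw [hA j hj i, if_neg hij]
    · rw [hA i hi i, if_pos rfl]
  · -- orbits
    intro hn3 α
    have horb : ∀ a ∈ B, α ∘ₗ Matrix.mulVecLin a ∈ Submodule.span ℝ
        ({α, LinearMap.proj last} : Set ((Fin n → ℝ) →ₗ[ℝ] ℝ)) := by
      rw [hB]
      intro a ha
      induction ha using Submodule.span_induction with
      | mem x hx =>
        rcases hx with hx | ⟨i, hi, rfl⟩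
        · simp only [Set.mem_singleton_iff] at hx
          subst hx
          rw [Matrix.mulVecLin_one, LinearMap.comp_id]
          exact Submodule.subset_span (Or.inl rfl)
        · rw [aux17_mulVecLin_E]
          exact Submodule.smul_mem _ _ (Submodule.subset_span (Or.inr rfl))
      | zero => simp only [Matrix.mulVecLin_zero, LinearMap.comp_zero]; exact Submodule.zero_mem _
      | add x y _ _ hx hy =>
        rw [Matrix.mulVecLin_add, LinearMap.comp_add]
        exact Submodule.add_mem _ hx hy
      | smul c x _ hx =>
        rw [aux17_mulVecLin_smul, LinearMap.comp_smul]
        exact Submodule.smul_mem _ _ hx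
    refine ⟨horb, fun htop => ?_⟩
    have hle : Submodule.span ℝ
        {f : (Fin n → ℝ) →ₗ[ℝ] ℝ | ∃ a ∈ B, f = α ∘ₗ Matrix.mulVecLin a}
        ≤ Submodule.span ℝ ({α, LinearMap.proj last} : Set ((Fin n → ℝ) →ₗ[ℝ] ℝ)) := by
      rw [Submodule.span_le]
      rintro f ⟨a, ha, rfl⟩
      exact horb a ha
    rw [htop, top_le_iff] at hle
    have h2 : Module.finrank ℝ ((Fin n → ℝ) →ₗ[ℝ] ℝ) ≤ 2 := by
      have hr : ({α, LinearMap.proj last} : Set ((Fin n → ℝ) →ₗ[ℝ] ℝ))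
          = Set.range ![α, LinearMap.proj last] := by
        simp [Matrix.range_cons, Matrix.range_empty, Set.pair_comm]
      calc Module.finrank ℝ ((Fin n → ℝ) →ₗ[ℝ] ℝ)
          = Module.finrank ℝ (Submodule.span ℝ
              ({α, LinearMap.proj last} : Set ((Fin n → ℝ) →ₗ[ℝ] ℝ))) := by
            rw [hle]; exact (finrank_top ℝ _).symm
        _ ≤ 2 := by
            rw [hr]
            exact (finrank_range_le_card _).trans_eq (by simp)
    rw [Module.finrank_linearMap_self, Module.finrank_fin_fun] at h2
    omega
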